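/- The improper integral ∫_{1/4}^{+∞} √(4z−1)/(2π z²) dz equals 1, i.e. the measure μ on [1/4, +∞) with density w(z) = √(4z−1)/(2π z²) with respect to Lebesgue measure is a probability measure. -/

import Mathlib

open MeasureTheory Topology Filter

noncomputable def F15 (z : ℝ) : ℝ :=
  (4 * Real.arctan (Real.sqrt (4 * z - 1)) - Real.sqrt (4 * z - 1) / z) / (2 * Real.pi)

lemma F15_hasDerivAt {x : ℝ} (hx : x ∈ Set.Ioi (1 / 4 : ℝ)) :
    HasDerivAt F15 (Real.sqrt (4 * x - 1) / (2 * Real.pi * x ^ 2)) x := by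
  have hx4 : (0:ℝ) < 4 * x - 1 := by simp only [Set.mem_Ioi] at hx; linarith
  have hxpos : (0:ℝ) < x := by simp only [Set.mem_Ioi] at hx; linarith
  have hs : (0:ℝ) < Real.sqrt (4 * x - 1) := Real.sqrt_pos.mpr hx4
  have hsne : Real.sqrt (4 * x - 1) ≠ 0 := ne_of_gt hs
  have hsq : Real.sqrt (4 * x - 1) ^ 2 = 4 * x - 1 := Real.sq_sqrt hx4.le
  have hinner : HasDerivAt (fun z : ℝ => 4 * z - 1) 4 x := by
    simpa using ((hasDerivAt_id x).const_mul 4).sub_const 1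
  have hsqrt : HasDerivAt (fun z : ℝ => Real.sqrt (4 * z - 1))
      (1 / (2 * Real.sqrt (4 * x - 1)) * 4) x :=
    (Real.hasDerivAt_sqrt (ne_of_gt hx4)).comp x hinner
  have harctan : HasDerivAt (fun z : ℝ => Real.arctan (Real.sqrt (4 * z - 1)))
      (1 / (1 + Real.sqrt (4 * x - 1) ^ 2) * (1 / (2 * Real.sqrt (4 * x - 1)) * 4)) x := by
    have := (Real.hasDerivAt_arctan (Real.sqrt (4 * x - 1))).comp x hsqrt; exact this
  have hdiv : HasDerivAt (fun z : ℝ => Real.sqrt (4 * z - 1) / z)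
      ((1 / (2 * Real.sqrt (4 * x - 1)) * 4 * x - Real.sqrt (4 * x - 1) * 1) / x ^ 2) x :=
    hsqrt.div (hasDerivAt_id x) (ne_of_gt hxpos)
  have h : HasDerivAt F15
      ((4 * (1 / (1 + Real.sqrt (4 * x - 1) ^ 2) * (1 / (2 * Real.sqrt (4 * x - 1)) * 4))
        - (1 / (2 * Real.sqrt (4 * x - 1)) * 4 * x - Real.sqrt (4 * x - 1) * 1) / x ^ 2)
        / (2 * Real.pi)) x :=
    ((harctan.const_mul 4).sub hdiv).div_const _
  convert h using 1
  have hpi : Real.pi ≠ 0 := Real.pi_ne_zero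
  rw [hsq]
  have h1 : (1:ℝ) + (4 * x - 1) = 4 * x := by ring
  rw [h1]
  field_simp
  nlinarith [hsq, hxpos, hs]

theorem stmt_15 :
    ∫ z in Set.Ioi (1 / 4 : ℝ), Real.sqrt (4 * z - 1) / (2 * Real.pi * z ^ 2) = 1 := by
  have hcont : ContinuousWithinAt F15 (Set.Ici (1 / 4 : ℝ)) (1 / 4) := by
    apply ContinuousWithinAt.div _ continuousWithinAt_const (by positivity)
    apply ContinuousWithinAt.sub
    · exact (continuousWithinAt_const.mul
        ((Real.continuous_arctan.comp (Real.continuous_sqrt.comp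
          (by continuity))).continuousWithinAt))
    · exact ContinuousWithinAt.div
        ((Real.continuous_sqrt.comp (by continuity)).continuousWithinAt)
        continuousWithinAt_id (by norm_num)
  have hpos : ∀ x ∈ Set.Ioi (1 / 4 : ℝ),
      0 ≤ Real.sqrt (4 * x - 1) / (2 * Real.pi * x ^ 2) := by
    intro x hx
    have hxpos : (0:ℝ) < x := lt_trans (by norm_num) hx
    positivity
  have htend : Filter.Tendsto F15 Filter.atTop (𝓝 1) := by
    have hsqrtTop : Tendsto Real.sqrt atTop atTop := by
      apply tendsto_atTop_atTop.mpr
      intro b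
      refine ⟨b ^ 2, fun a ha => le_trans (le_abs_self b) ?_⟩
      rw [← Real.sqrt_sq_eq_abs]
      exact Real.sqrt_le_sqrt ha
    have hlin : Tendsto (fun z : ℝ => 4 * z - 1) atTop atTop := by
      apply tendsto_atTop_add_const_right
      exact Tendsto.const_mul_atTop (by norm_num) tendsto_id
    have h1 : Tendsto (fun z : ℝ => Real.arctan (Real.sqrt (4 * z - 1)))
        atTop (𝓝 (Real.pi / 2)) :=
      (Real.tendsto_arctan_atTop.mono_right nhdsWithin_le_nhds).comp
        (hsqrtTop.comp hlin)
    have h2 : Tendsto (fun z : ℝ => Real.sqrt (4 * z - 1) / z) atTop (𝓝 0) := by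
      have hin : Tendsto (fun z : ℝ => 4 / z - 1 / z ^ 2) atTop (𝓝 0) := by
        have ha : Tendsto (fun z : ℝ => 4 / z) atTop (𝓝 0) :=
          Tendsto.div_atTop tendsto_const_nhds tendsto_id
        have hb : Tendsto (fun z : ℝ => 1 / z ^ 2) atTop (𝓝 0) :=
          Tendsto.div_atTop tendsto_const_nhds (tendsto_pow_atTop two_ne_zero)
        simpa using ha.sub hb
      have hcomp : Tendsto (fun z : ℝ => Real.sqrt (4 / z - 1 / z ^ 2)) atTop (𝓝 0) := by
        have := (Real.continuous_sqrt.tendsto 0).comp hin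
        simpa [Function.comp_def] using this
      refine hcomp.congr' ?_
      filter_upwards [Filter.eventually_gt_atTop (0:ℝ)] with z hz
      have : 4 / z - 1 / z ^ 2 = (4 * z - 1) / z ^ 2 := by field_simp
      rw [this, Real.sqrt_div' _ (by positivity), Real.sqrt_sq hz.le]
    have := ((h1.const_mul 4).sub h2).div_const (2 * Real.pi)
    have hval : (4 * (Real.pi / 2) - 0) / (2 * Real.pi) = 1 := by
      field_simp
      ring
    rw [hval] at this
    exact this
  have key := integral_Ioi_of_hasDerivAt_of_nonneg hcont
    (fun x hx => F15_hasDerivAt hx) hpos htend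
  rw [key]
  norm_num [F15]
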